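/- The Gaver–Stehfest coefficients μ_i = (−1)^{M/2+i} Σ_{k=⌈(i+1)/2⌉}^{min(i, M/2)} k^{M/2}(2k)! / [(M/2−k)! k! (k−1)! (i−k)! (2k−i)!] satisfy Σ_{i=1}^{M} μ_i = 0 for every even positive integer M ≥ 2. -/

import Mathlib

/-- The Gaver–Stehfest coefficients `μ_i` for an even parameter `M`:
`μ_i = (−1)^(M/2+i) Σ_{k=[(i+1)/2]}^{min(i,M/2)} k^(M/2)(2k)! /
  [(M/2−k)! k! (k−1)! (i−k)! (2k−i)!]`. -/
def gsCoeff (M i : ℕ) : ℚ :=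
  (-1 : ℚ) ^ (M / 2 + i) *
    ∑ k ∈ Finset.Icc ((i + 1) / 2) (min i (M / 2)),
      ((k : ℚ) ^ (M / 2) * (Nat.factorial (2 * k) : ℚ)) /
        ((Nat.factorial (M / 2 - k) : ℚ) * (Nat.factorial k : ℚ) *
          (Nat.factorial (k - 1) : ℚ) * (Nat.factorial (i - k) : ℚ) *
          (Nat.factorial (2 * k - i) : ℚ))


lemma inner_zero (k : ℕ) (hk : 1 ≤ k) :
    ∑ i ∈ Finset.Icc k (2*k),
      (-1:ℚ)^i / ((Nat.factorial (i-k) : ℚ) * (Nat.factorial (2*k-i) : ℚ)) = 0 := by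
  rw [← Finset.Ico_add_one_right_eq_Icc, Finset.sum_Ico_eq_sum_range]
  have h2 : 2*k + 1 - k = k+1 := by omega
  rw [h2]
  have key : ∀ j ∈ Finset.range (k+1),
      (-1:ℚ)^(k+j) / ((Nat.factorial (k+j-k) : ℚ) * (Nat.factorial (2*k-(k+j)) : ℚ))
      = (-1:ℚ)^k / (Nat.factorial k : ℚ) * ((-1:ℚ)^j * (k.choose j : ℚ)) := by
    intro j hj
    have hj' : j ≤ k := Nat.lt_succ_iff.mp (Finset.mem_range.mp hj)
    have e1 : k+j-k = j := by omega
    have e2 : 2*k-(k+j) = k-j := by omega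
    rw [e1, e2, pow_add]
    have hc : (k.choose j : ℚ) * (Nat.factorial j : ℚ) * (Nat.factorial (k-j) : ℚ)
        = (Nat.factorial k : ℚ) := by
      exact_mod_cast congrArg (Nat.cast : ℕ → ℚ) (Nat.choose_mul_factorial_mul_factorial hj')
    have h1 : (Nat.factorial j : ℚ) ≠ 0 := Nat.cast_ne_zero.mpr (Nat.factorial_ne_zero j)
    have h2 : (Nat.factorial (k-j) : ℚ) ≠ 0 := Nat.cast_ne_zero.mpr (Nat.factorial_ne_zero _)
    have h3 : (Nat.factorial k : ℚ) ≠ 0 := Nat.cast_ne_zero.mpr (Nat.factorial_ne_zero k)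
    field_simp
    linear_combination (-1:ℚ) * hc
  rw [Finset.sum_congr rfl key, ← Finset.mul_sum]
  have halt : ∑ j ∈ Finset.range (k+1), (-1:ℚ)^j * (k.choose j : ℚ) = 0 := by
    have := Int.alternating_sum_range_choose (n := k)
    have hk0 : k ≠ 0 := by omega
    rw [if_neg hk0] at this
    exact_mod_cast congrArg (Int.cast : ℤ → ℚ) this
  rw [halt, mul_zero]

theorem gsCoeff_sum_eq_zero (M : ℕ) (hM : Even M) (hM2 : 2 ≤ M) :
    ∑ i ∈ Finset.Icc 1 M, gsCoeff M i = 0 := by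
  obtain ⟨n, hn⟩ := hM
  have hMn : M = 2 * n := by omega
  have hn2 : M / 2 = n := by omega
  unfold gsCoeff
  simp only [hn2, Finset.mul_sum]
  rw [Finset.sum_comm' (t' := Finset.Icc 1 n)
    (s' := fun k => Finset.Icc k (2*k))
    (by
      intro i k
      simp only [Finset.mem_Icc, le_min_iff]
      omega)]
  apply Finset.sum_eq_zero
  intro k hk
  have hk1 : 1 ≤ k := (Finset.mem_Icc.mp hk).1
  have key : ∀ i ∈ Finset.Icc k (2*k),
      (-1:ℚ)^(n+i) * (((k : ℚ) ^ n * (Nat.factorial (2 * k) : ℚ)) /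
        ((Nat.factorial (n - k) : ℚ) * (Nat.factorial k : ℚ) *
          (Nat.factorial (k - 1) : ℚ) * (Nat.factorial (i - k) : ℚ) *
          (Nat.factorial (2 * k - i) : ℚ)))
      = ((-1:ℚ)^n * ((k : ℚ) ^ n * (Nat.factorial (2 * k) : ℚ)) /
        ((Nat.factorial (n - k) : ℚ) * (Nat.factorial k : ℚ) *
          (Nat.factorial (k - 1) : ℚ))) *
        ((-1:ℚ)^i / ((Nat.factorial (i-k) : ℚ) * (Nat.factorial (2*k-i) : ℚ))) := by
    intro i hi
    rw [pow_add]
    field_simp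
  rw [Finset.sum_congr rfl key, ← Finset.mul_sum, inner_zero k hk1, mul_zero]
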